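/- arXiv:0712.1079 — 2 statements merged into one kernel-verified Lean document; each statement's English description precedes it below -/
import Mathlib

section
/- Let V be an n-dimensional vector space over an algebraically closed field, x a nilpotent endomorphism of Jordan type λ, and v ∈ V with normal basis of type (μ;ν) (so λ = μ+ν). Then the subspace E^{(v,x)} = {y ∈ End(V) : xy = yx and yv = 0} has dimension b(μ;ν) = 2n(μ) + 2n(ν) + |ν|. -/
/-- A partition: a nonincreasing sequence of nonnegative integers (indexed from 0)
with finitely many nonzero terms. -/
def IsPartition (f : ℕ → ℕ) : Prop :=
  Antitone f ∧ (Function.support f).Finite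

/-- The size `|f| = Σ_i f_i` of a partition. -/
noncomputable def psize (f : ℕ → ℕ) : ℕ := ∑ᶠ i, f i

/-- `nFn f = Σ_{i≥1} (i-1) f_i`, written with 0-indexing as `Σ_i i * f i`. -/
noncomputable def nFn (f : ℕ → ℕ) : ℕ := ∑ᶠ i, i * f i

/-- Index set of the diagram of `μ + ν`: pairs `(i,j)` (0-indexed row `i`,
position `j`) with `j < μ_i + ν_i`. -/
def BipIdx (μ ν : ℕ → ℕ) : Type := {p : ℕ × ℕ // p.2 < μ p.1 + ν p.1}

/-- `b` is a normal basis of type `(μ;ν)` for `(v,x)`: it is a Jordan basis for `x`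
of shape `μ + ν` (so `x b_{i,j} = b_{i,j-1}` and `x b_{i,0} = 0`), and
`v = Σ_{i : μ_i > 0} b_{i, μ_i - 1}`. -/
def IsNormalBasis {F V : Type*} [Field F] [AddCommGroup V] [Module F V]
    (μ ν : ℕ → ℕ) (v : V) (x : Module.End F V) (b : Module.Basis (BipIdx μ ν) F V) : Prop :=
  (∀ p : BipIdx μ ν,
    x (b p) = if p.1.2 = 0 then 0
      else b ⟨(p.1.1, p.1.2 - 1), lt_of_le_of_lt (Nat.sub_le _ _) p.2⟩) ∧
  v = ∑ᶠ i : {i : ℕ // 0 < μ i},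
        b ⟨(i.1, μ i.1 - 1),
           lt_of_lt_of_le (Nat.sub_lt i.2 Nat.one_pos) (Nat.le_add_right _ _)⟩

namespace Stab

attribute [local instance] Classical.propDecidable

variable {F V : Type*} [Field F] [AddCommGroup V] [Module F V]
  (μ ν : ℕ → ℕ) (x : Module.End F V) (b : Module.Basis (BipIdx μ ν) F V)

/-- Jordan basis hypothesis. -/
def JB : Prop := ∀ p : BipIdx μ ν,
    x (b p) = if p.1.2 = 0 then 0
      else b ⟨(p.1.1, p.1.2 - 1), lt_of_le_of_lt (Nat.sub_le _ _) p.2⟩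

/-- The shift map sending block `k` to block `i` with shift `s`. -/
noncomputable def Y (i k s : ℕ) : Module.End F V :=
  b.constr F fun p => if h : p.1.1 = k ∧ s ≤ p.1.2 ∧ p.1.2 - s < μ i + ν i
    then b ⟨(i, p.1.2 - s), h.2.2⟩ else 0

lemma Y_apply (i k s : ℕ) (p : BipIdx μ ν) :
    Y μ ν b i k s (b p) = if h : p.1.1 = k ∧ s ≤ p.1.2 ∧ p.1.2 - s < μ i + ν i
      then b ⟨(i, p.1.2 - s), h.2.2⟩ else 0 := by
  simp [Y, Module.Basis.constr_basis]

lemma Y_apply' (i k s k' l : ℕ) (h : l < μ k' + ν k') :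
    Y μ ν b i k s (b ⟨(k', l), h⟩) =
      if h2 : k' = k ∧ s ≤ l ∧ l - s < μ i + ν i then b ⟨(i, l - s), h2.2.2⟩ else 0 :=
  Y_apply μ ν b i k s ⟨(k', l), h⟩

variable (hx : JB μ ν x b)
include hx

lemma JB_apply (k l : ℕ) (h : l < μ k + ν k) :
    x (b ⟨(k, l), h⟩) = if l = 0 then 0
      else b ⟨(k, l - 1), lt_of_le_of_lt (Nat.sub_le _ _) h⟩ :=
  hx ⟨(k, l), h⟩

/-- `Y i k s` commutes with `x` provided `μ k + ν k ≤ μ i + ν i + s`. -/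
lemma Y_comm (i k s : ℕ) (hs : μ k + ν k ≤ μ i + ν i + s) :
    x * Y μ ν b i k s = Y μ ν b i k s * x := by
  apply b.ext
  intro p
  obtain ⟨⟨k', l⟩, hl⟩ := p
  have hl2 : l < μ k' + ν k' := hl
  rw [Module.End.mul_apply, Module.End.mul_apply, JB_apply μ ν x b hx, Y_apply']
  by_cases hk : k' = k
  · subst hk
    by_cases hsl2 : s ≤ l
    · have hl' : l - s < μ i + ν i := by omega
      rw [dif_pos ⟨rfl, hsl2, hl'⟩, JB_apply μ ν x b hx]
      by_cases h0 : l = 0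
      · subst h0
        have h0s : s = 0 := by omega
        subst h0s
        rw [if_pos rfl, if_pos rfl, map_zero]
      · rw [if_neg h0, Y_apply']
        by_cases hsl : s ≤ l - 1
        · rw [if_neg (show ¬(l - s = 0) by omega), dif_pos ⟨rfl, hsl, by omega⟩]
          congr 1
          exact Subtype.ext (congrArg (fun t => (i, t)) (by omega : l - s - 1 = l - 1 - s))
        · rw [if_pos (by omega), dif_neg (by omega)]
    · rw [dif_neg (by omega)]
      by_cases h0 : l = 0
      · rw [if_pos h0, map_zero, map_zero]
      · rw [if_neg h0, Y_apply', dif_neg (by omega), map_zero]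
  · rw [dif_neg (by tauto)]
    by_cases h0 : l = 0
    · rw [if_pos h0, map_zero, map_zero]
    · rw [if_neg h0, Y_apply', dif_neg (by tauto), map_zero]


lemma xpow_apply (m k l : ℕ) (h : l < μ k + ν k) :
    (x ^ m) (b ⟨(k, l), h⟩) =
      if m ≤ l then b ⟨(k, l - m), lt_of_le_of_lt (Nat.sub_le _ _) h⟩ else 0 := by
  induction m generalizing l with
  | zero =>
    rw [pow_zero, if_pos (Nat.zero_le _)]
    simp only [Module.End.one_apply]
    congr 1
  | succ m ih =>
    rw [pow_succ, Module.End.mul_apply, JB_apply μ ν x b hx]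
    by_cases h0 : l = 0
    · subst h0
      rw [if_pos rfl, map_zero, if_neg (by omega)]
    · rw [if_neg h0, ih (l - 1) (lt_of_le_of_lt (Nat.sub_le _ _) h)]
      by_cases hm : m ≤ l - 1
      · rw [if_pos hm, if_pos (by omega)]
        congr 1
        exact Subtype.ext (congrArg (fun t => (k, t)) (by omega : l - 1 - m = l - (m + 1)))
      · rw [if_neg hm, if_neg (by omega)]

lemma eq_zero_of_comm_of_top (z : Module.End F V) (hc : x * z = z * x)
    (h0 : ∀ (k : ℕ) (hk : 0 < μ k + ν k),
      z (b ⟨(k, μ k + ν k - 1), Nat.sub_lt hk Nat.one_pos⟩) = 0) : z = 0 := by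
  apply b.ext
  intro p
  obtain ⟨⟨k, l⟩, hl⟩ := p
  have hl2 : l < μ k + ν k := hl
  have hk : 0 < μ k + ν k := by omega
  have key : (x ^ (μ k + ν k - 1 - l)) (b ⟨(k, μ k + ν k - 1), Nat.sub_lt hk Nat.one_pos⟩)
      = b ⟨(k, l), hl⟩ := by
    rw [xpow_apply μ ν x b hx, if_pos (by omega)]
    congr 1
    exact Subtype.ext (congrArg (fun t => (k, t))
      (by omega : μ k + ν k - 1 - (μ k + ν k - 1 - l) = l))
  have hcm : z * x ^ (μ k + ν k - 1 - l) = x ^ (μ k + ν k - 1 - l) * z :=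
    (Commute.pow_left hc _).symm
  rw [LinearMap.zero_apply, ← key, ← Module.End.mul_apply, hcm, Module.End.mul_apply,
    h0 k hk, map_zero]


variable (v : V)
variable (hv : v = ∑ᶠ i : {i : ℕ // 0 < μ i},
        b ⟨(i.1, μ i.1 - 1),
           lt_of_lt_of_le (Nat.sub_lt i.2 Nat.one_pos) (Nat.le_add_right _ _)⟩)
variable (hμf : (Function.support μ).Finite)

omit hx
include hv hμf

lemma Y_v (i k s : ℕ) :
    Y μ ν b i k s v = if h : s < μ k ∧ μ k - 1 - s < μ i + ν i
      then b ⟨(i, μ k - 1 - s), h.2⟩ else 0 := by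
  have hfin : ({i : ℕ | 0 < μ i}).Finite :=
    hμf.subset (fun a ha => Nat.pos_iff_ne_zero.mp ha)
  haveI : Fintype {i : ℕ // 0 < μ i} := hfin.fintype
  rw [hv, finsum_eq_sum_of_fintype, map_sum]
  have hterm : ∀ i' : {i : ℕ // 0 < μ i},
      Y μ ν b i k s (b ⟨(i'.1, μ i'.1 - 1),
        lt_of_lt_of_le (Nat.sub_lt i'.2 Nat.one_pos) (Nat.le_add_right _ _)⟩) =
      if h2 : i'.1 = k ∧ s ≤ μ i'.1 - 1 ∧ μ i'.1 - 1 - s < μ i + ν i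
        then b ⟨(i, μ i'.1 - 1 - s), h2.2.2⟩ else 0 := fun i' => Y_apply' μ ν b i k s _ _ _
  by_cases hk : 0 < μ k
  · rw [Finset.sum_eq_single_of_mem ⟨k, hk⟩ (Finset.mem_univ _)
      (fun b' _ hb' => by
        rw [hterm]
        apply dif_neg
        rintro ⟨h1, -⟩
        exact hb' (Subtype.ext h1)),
      hterm]
    by_cases hc1 : s ≤ μ k - 1 ∧ μ k - 1 - s < μ i + ν i
    · rw [dif_pos ⟨rfl, hc1⟩, dif_pos ⟨by omega, hc1.2⟩]
    · rw [dif_neg (show ¬(k = k ∧ s ≤ μ k - 1 ∧ μ k - 1 - s < μ i + ν i) from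
          fun hh => hc1 ⟨hh.2.1, hh.2.2⟩),
        dif_neg (show ¬(s < μ k ∧ μ k - 1 - s < μ i + ν i) from
          fun hh => hc1 ⟨by omega, hh.2⟩)]
  · rw [Finset.sum_eq_zero (fun i' _ => by
      rw [hterm]
      apply dif_neg
      rintro ⟨h1, -⟩
      exact hk (h1 ▸ i'.2)),
      dif_neg (by omega)]


omit hv hμf

/-- Index set for a basis of the commutant: triples `(i,k,s)`. -/
def SS (μ ν : ℕ → ℕ) (N : ℕ) : Finset (ℕ × ℕ × ℕ) :=
  (Finset.range N ×ˢ Finset.range N).biUnion fun q =>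
    (Finset.Ico (μ q.2 + ν q.2 - (μ q.1 + ν q.1)) (μ q.2 + ν q.2)).image
      fun s => (q.1, q.2, s)

lemma mem_SS {N : ℕ} {u : ℕ × ℕ × ℕ} :
    u ∈ SS μ ν N ↔ u.1 < N ∧ u.2.1 < N ∧
      μ u.2.1 + ν u.2.1 ≤ μ u.1 + ν u.1 + u.2.2 ∧ u.2.2 < μ u.2.1 + ν u.2.1 := by
  obtain ⟨i, k, s⟩ := u
  simp only [SS, Finset.mem_biUnion, Finset.mem_product, Finset.mem_image,
    Finset.mem_Ico, Finset.mem_range, Prod.exists, Prod.mk.injEq]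
  constructor
  · rintro ⟨a, c, ⟨h1, h2⟩, t, ⟨h3, h4⟩, rfl, rfl, rfl⟩
    exact ⟨h1, h2, by omega, h4⟩
  · rintro ⟨h1, h2, h3, h4⟩
    exact ⟨i, k, ⟨h1, h2⟩, s, ⟨by omega, h4⟩, rfl, rfl, rfl⟩

/-- The "leading" subset. -/
def Ld (μ ν : ℕ → ℕ) (N : ℕ) : Finset (ℕ × ℕ × ℕ) :=
  (SS μ ν N).filter fun u => u.1 = u.2.1 ∧ u.2.2 < μ u.1

/-- The index set of the basis of `E`. -/
def SS' (μ ν : ℕ → ℕ) (N : ℕ) : Finset (ℕ × ℕ × ℕ) :=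
  (SS μ ν N).filter fun u => ¬(u.1 = u.2.1 ∧ u.2.2 < μ u.1)

lemma j_lt (hμa : Antitone μ) (hνa : Antitone ν) {i k s : ℕ}
    (hS : μ k + ν k ≤ μ i + ν i + s) (hs : s < μ k) : μ k - 1 - s < μ i := by
  rcases le_total i k with h | h
  · have := hμa h
    omega
  · have := hνa h
    omega

/-- The basis elements of `E`. -/
noncomputable def ee (u : ℕ × ℕ × ℕ) : Module.End F V :=
  Y μ ν b u.1 u.2.1 u.2.2 -
    (if u.2.2 < μ u.2.1 then Y μ ν b u.1 u.1 (μ u.1 - (μ u.2.1 - u.2.2)) else 0)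

include hx

lemma ee_comm {N : ℕ} {u : ℕ × ℕ × ℕ} (hu : u ∈ SS μ ν N) :
    x * ee μ ν b u = ee μ ν b u * x := by
  obtain ⟨h1, h2, h3, h4⟩ := (mem_SS μ ν).mp hu
  unfold ee
  rw [mul_sub, sub_mul, Y_comm μ ν x b hx _ _ _ h3]
  congr 1
  split_ifs with h
  · rw [Y_comm μ ν x b hx _ _ _ (by omega)]
  · rw [mul_zero, zero_mul]

omit hx
include hv hμf

lemma ee_v (hμa : Antitone μ) (hνa : Antitone ν) {N : ℕ} {u : ℕ × ℕ × ℕ}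
    (hu : u ∈ SS μ ν N) : ee μ ν b u v = 0 := by
  obtain ⟨h1, h2, h3, h4⟩ := (mem_SS μ ν).mp hu
  obtain ⟨i, k, s⟩ := u
  simp only at h1 h2 h3 h4
  unfold ee
  simp only [LinearMap.sub_apply]
  by_cases hs : s < μ k
  · have hj : μ k - 1 - s < μ i := j_lt μ ν hμa hνa h3 hs
    rw [if_pos hs, Y_v μ ν b v hv hμf, Y_v μ ν b v hv hμf,
      dif_pos ⟨hs, by omega⟩, dif_pos (show μ i - (μ k - s) < μ i ∧
        μ i - 1 - (μ i - (μ k - s)) < μ i + ν i by omega)]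
    rw [sub_eq_zero]
    congr 1
    exact Subtype.ext (congrArg (fun t => (i, t))
      (by omega : μ k - 1 - s = μ i - 1 - (μ i - (μ k - s))))
  · rw [if_neg hs, Y_v μ ν b v hv hμf, dif_neg (by omega), LinearMap.zero_apply, sub_zero]


omit hv hμf

lemma coord_Y (i' k' s' k l : ℕ) (hl : l < μ k + ν k) (p : BipIdx μ ν) :
    b.coord p (Y μ ν b i' k' s' (b ⟨(k, l), hl⟩)) =
      if h : k = k' ∧ s' ≤ l ∧ l - s' < μ i' + ν i'
        then (if (⟨(i', l - s'), h.2.2⟩ : BipIdx μ ν) = p then 1 else 0) else 0 := by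
  rw [Y_apply']
  by_cases h : k = k' ∧ s' ≤ l ∧ l - s' < μ i' + ν i'
  · rw [dif_pos h, dif_pos h, Module.Basis.coord_apply]
    erw [b.repr_self_apply]
    exact if_congr Iff.rfl rfl rfl
  · rw [dif_neg h, dif_neg h, map_zero]

lemma ee_indep (hμa : Antitone μ) (hνa : Antitone ν) (N : ℕ) :
    LinearIndependent F (fun u : ↥(SS' μ ν N) => ee μ ν b u.1) := by
  rw [Fintype.linearIndependent_iff]
  intro g hg u₀
  obtain ⟨⟨i, k, s⟩, hu₀⟩ := u₀
  obtain ⟨hmem, hnot⟩ := Finset.mem_filter.mp hu₀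
  obtain ⟨h1, h2, h3, h4⟩ := (mem_SS μ ν).mp hmem
  simp only at h1 h2 h3 h4 hnot
  have hlk : 0 < μ k + ν k := by omega
  have hjp : μ k + ν k - 1 - s < μ i + ν i := by omega
  set p : BipIdx μ ν := ⟨(i, μ k + ν k - 1 - s), hjp⟩ with hp
  set q : BipIdx μ ν := ⟨(k, μ k + ν k - 1), by exact Nat.sub_lt hlk Nat.one_pos⟩ with hq
  set L : Module.End F V →ₗ[F] F :=
    (b.coord p).comp (LinearMap.applyₗ (b q)) with hL
  have hLY : ∀ i' k' s' : ℕ, L (Y μ ν b i' k' s') =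
      if h : k = k' ∧ s' ≤ μ k + ν k - 1 ∧ μ k + ν k - 1 - s' < μ i' + ν i'
        then (if (⟨(i', μ k + ν k - 1 - s'), h.2.2⟩ : BipIdx μ ν) = p then 1 else 0)
        else 0 := by
    intro i' k' s'
    show b.coord p (Y μ ν b i' k' s' (b q)) = _
    rw [hq, coord_Y]
    split_ifs <;> rfl
  have key : ∀ u' : ↥(SS' μ ν N), L (ee μ ν b u'.1) =
      if u'.1 = (i, k, s) then 1 else 0 := by
    rintro ⟨⟨i', k', s'⟩, hu'⟩
    obtain ⟨hmem', hnot'⟩ := Finset.mem_filter.mp hu'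
    obtain ⟨h1', h2', h3', h4'⟩ := (mem_SS μ ν).mp hmem'
    simp only at h1' h2' h3' h4' hnot'
    unfold ee
    rw [map_sub]
    -- correction term is always killed by L
    have hcorr : L (if s' < μ k' then Y μ ν b i' i' (μ i' - (μ k' - s')) else 0) = 0 := by
      split_ifs with hs'
      · have hjlt : μ k' - 1 - s' < μ i' := j_lt μ ν hμa hνa h3' hs'
        rw [hLY]
        by_cases hc : k = i' ∧ μ i' - (μ k' - s') ≤ μ k + ν k - 1 ∧
            μ k + ν k - 1 - (μ i' - (μ k' - s')) < μ i' + ν i'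
        · rw [dif_pos hc, if_neg]
          intro hpe
          have hpe2 : (i', μ k + ν k - 1 - (μ i' - (μ k' - s'))) =
              (i, μ k + ν k - 1 - s) := congrArg Subtype.val hpe
          have hii : i' = i := congrArg Prod.fst hpe2
          have hss : μ k + ν k - 1 - (μ i' - (μ k' - s')) = μ k + ν k - 1 - s :=
            congrArg Prod.snd hpe2
          subst hii
          -- then i = k = i' and s = μ i' - (μ k' - s') < μ i, contradicting hnot
          exact hnot ⟨by omega, by omega⟩
        · rw [dif_neg hc]
      · rw [map_zero]
    rw [hcorr, sub_zero, hLY]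
    by_cases heq : (i', k', s') = (i, k, s)
    · obtain ⟨hi, hk, hs⟩ : i' = i ∧ k' = k ∧ s' = s := by
        simpa [Prod.ext_iff] using heq
      subst hi; subst hk; subst hs
      rw [if_pos heq, dif_pos ⟨rfl, Nat.le_pred_of_lt h4, hjp⟩, if_pos rfl]
    · rw [if_neg heq]
      by_cases hc : k = k' ∧ s' ≤ μ k + ν k - 1 ∧ μ k + ν k - 1 - s' < μ i' + ν i'
      · rw [dif_pos hc, if_neg]
        intro hpe
        have hpe2 : (i', μ k + ν k - 1 - s') = (i, μ k + ν k - 1 - s) :=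
          congrArg Subtype.val hpe
        have hii : i' = i := congrArg Prod.fst hpe2
        have hss : μ k + ν k - 1 - s' = μ k + ν k - 1 - s := congrArg Prod.snd hpe2
        subst hii
        -- s' < μ k' + ν k' = μ k + ν k, so s' = s
        apply heq
        have hkk : k' = k := hc.1.symm
        subst hkk
        have : s' = s := by omega
        rw [this]
      · rw [dif_neg hc]
  have hsum := congrArg L hg
  rw [map_sum, map_zero] at hsum
  simp only [map_smul, key, smul_eq_mul] at hsum
  rw [Finset.sum_eq_single_of_mem (⟨(i, k, s), hu₀⟩ : ↥(SS' μ ν N)) (Finset.mem_univ _)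
    (fun b' _ hb' => by
      rw [if_neg (fun hc => hb' (Subtype.ext hc)), mul_zero])] at hsum
  rw [if_pos rfl, mul_one] at hsum
  exact hsum


include hx

lemma repr_zero_of_pow [Fintype (BipIdx μ ν)] (m : ℕ) (w : V) (hw : (x ^ m) w = 0)
    (p : BipIdx μ ν) (hm : m ≤ p.1.2) : b.repr w p = 0 := by
  obtain ⟨⟨i, j⟩, hj⟩ := p
  simp only at hm
  have hq : j - m < μ i + ν i := lt_of_le_of_lt (Nat.sub_le _ _) hj
  set q : BipIdx μ ν := ⟨(i, j - m), hq⟩ with hqdef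
  have hco : ∀ r : BipIdx μ ν, b.coord q ((x ^ m) (b r)) =
      if r = ⟨(i, j), hj⟩ then 1 else 0 := by
    rintro ⟨⟨k, l⟩, hr⟩
    rw [xpow_apply μ ν x b hx]
    by_cases hml : m ≤ l
    · rw [if_pos hml, Module.Basis.coord_apply]
      erw [b.repr_self_apply]
      by_cases he : (⟨⟨k, l⟩, hr⟩ : BipIdx μ ν) = ⟨(i, j), hj⟩
      · erw [if_pos he, if_pos]
        have : (k, l) = (i, j) := congrArg Subtype.val he
        have hki : k = i := congrArg Prod.fst this
        have hlj : l = j := congrArg Prod.snd this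
        exact Subtype.ext (show (k, l - m) = (i, j - m) by rw [hki, hlj])
      · erw [if_neg he, if_neg]
        intro hcon
        apply he
        have : (k, l - m) = (i, j - m) := congrArg Subtype.val hcon
        have hki : k = i := congrArg Prod.fst this
        have hlj : l - m = j - m := congrArg Prod.snd this
        refine Subtype.ext (show (k, l) = (i, j) from ?_)
        rw [hki]
        exact congrArg (fun t => (i, t)) (by omega)
    · rw [if_neg hml, map_zero, if_neg]
      intro hcon
      have : (k, l) = (i, j) := congrArg Subtype.val hcon
      have hlj : l = j := congrArg Prod.snd this
      omega
  have h0 : b.coord q ((x ^ m) w) = 0 := by rw [hw, map_zero]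
  rw [← b.sum_repr w, map_sum, map_sum] at h0
  simp only [map_smul, hco, smul_eq_mul] at h0
  have hcol := Fintype.sum_eq_single (⟨(i, j), hj⟩ : BipIdx μ ν)
    (f := fun r : BipIdx μ ν => b.repr w r * (if r = ⟨(i, j), hj⟩ then 1 else 0))
    (fun r hr => show b.repr w r * (if r = ⟨(i, j), hj⟩ then 1 else 0) = 0 by
      rw [if_neg hr, mul_zero])
  erw [if_pos rfl, mul_one] at hcol
  rw [hcol] at h0
  simpa using h0

lemma repr_top_zero [Fintype (BipIdx μ ν)] (y : Module.End F V) (hcomm : x * y = y * x)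
    (k : ℕ) (hk : 0 < μ k + ν k) (p : BipIdx μ ν) (hp : μ k + ν k ≤ p.1.2) :
    b.repr (y (b ⟨(k, μ k + ν k - 1), Nat.sub_lt hk Nat.one_pos⟩)) p = 0 := by
  apply repr_zero_of_pow μ ν x b hx (μ k + ν k) _ _ p hp
  have hxt : (x ^ (μ k + ν k)) (b ⟨(k, μ k + ν k - 1), Nat.sub_lt hk Nat.one_pos⟩) = 0 := by
    rw [xpow_apply μ ν x b hx, if_neg (by omega)]
  have hcp : x ^ (μ k + ν k) * y = y * x ^ (μ k + ν k) :=
    Commute.pow_left hcomm _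
  rw [← Module.End.mul_apply, hcp, Module.End.mul_apply, hxt, map_zero]

/-- Coordinates of a commuting endomorphism. -/
noncomputable def cc (y : Module.End F V) (u : ℕ × ℕ × ℕ) : F :=
  if h : u.2.2 < μ u.2.1 + ν u.2.1 ∧
      μ u.2.1 + ν u.2.1 - 1 - u.2.2 < μ u.1 + ν u.1 then
    b.repr (y (b ⟨(u.2.1, μ u.2.1 + ν u.2.1 - 1), Nat.sub_lt (by omega) Nat.one_pos⟩))
      ⟨(u.1, μ u.2.1 + ν u.2.1 - 1 - u.2.2), h.2⟩
  else 0

lemma y_eq_sum [Fintype (BipIdx μ ν)] {N : ℕ} (hN : ∀ i, N ≤ i → μ i = 0 ∧ ν i = 0)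
    (y : Module.End F V) (hcomm : x * y = y * x) :
    y = ∑ u ∈ SS μ ν N, cc μ ν b y u • Y μ ν b u.1 u.2.1 u.2.2 := by
  have hrow : ∀ i : ℕ, 0 < μ i + ν i → i < N := by
    intro i hi
    by_contra hcon
    obtain ⟨ha, hb2⟩ := hN i (le_of_not_gt hcon)
    omega
  rw [← sub_eq_zero]
  apply eq_zero_of_comm_of_top μ ν x b hx
  · -- commutes
    rw [mul_sub, sub_mul, hcomm]
    congr 1
    rw [Finset.mul_sum, Finset.sum_mul]
    refine Finset.sum_congr rfl (fun u hu => ?_)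
    obtain ⟨h1, h2, h3, h4⟩ := (mem_SS μ ν).mp hu
    rw [mul_smul_comm, smul_mul_assoc, Y_comm μ ν x b hx _ _ _ h3]
  · -- kills top vectors
    intro k hk
    rw [LinearMap.sub_apply, sub_eq_zero]
    set tk : BipIdx μ ν := ⟨(k, μ k + ν k - 1), Nat.sub_lt hk Nat.one_pos⟩ with htk
    have hTsub : ∀ p : BipIdx μ ν, p ∉ Finset.univ.filter
        (fun p : BipIdx μ ν => p.1.2 < μ k + ν k) → b.repr (y (b tk)) p • b p = 0 := by
      intro p hp
      rw [Finset.mem_filter, not_and] at hp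
      have := hp (Finset.mem_univ _)
      rw [repr_top_zero μ ν x b hx y hcomm k hk p (by omega), zero_smul]
    have hy : (∑ p ∈ Finset.univ.filter (fun p : BipIdx μ ν => p.1.2 < μ k + ν k),
        b.repr (y (b tk)) p • b p) = y (b tk) := by
      rw [Finset.sum_subset (Finset.filter_subset _ _) (fun p _ hp => hTsub p hp)]
      exact b.sum_repr _
    rw [LinearMap.sum_apply]
    simp only [LinearMap.smul_apply]
    have hfil : ∑ u ∈ SS μ ν N, cc μ ν b y u • Y μ ν b u.1 u.2.1 u.2.2 (b tk) =
        ∑ u ∈ (SS μ ν N).filter (fun u => u.2.1 = k),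
          cc μ ν b y u • Y μ ν b u.1 u.2.1 u.2.2 (b tk) := by
      refine (Finset.sum_filter_of_ne (fun u hu hne => ?_)).symm
      by_contra hcon
      apply hne
      rw [htk, Y_apply' μ ν b, dif_neg (fun hh => hcon hh.1.symm), smul_zero]
    rw [hfil, ← hy]
    refine (Finset.sum_bij'
      (i := fun (u : ℕ × ℕ × ℕ) (hu : u ∈ (SS μ ν N).filter (fun u => u.2.1 = k)) =>
        (⟨(u.1, μ k + ν k - 1 - u.2.2), by
          obtain ⟨huS, hk'⟩ := Finset.mem_filter.mp hu
          obtain ⟨h1, h2, h3, h4⟩ := (mem_SS μ ν).mp huS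
          rw [hk'] at h3 h4
          show μ k + ν k - 1 - u.2.2 < μ u.1 + ν u.1
          omega⟩ : BipIdx μ ν))
      (j := fun (p : BipIdx μ ν)
          (hp : p ∈ Finset.univ.filter (fun p : BipIdx μ ν => p.1.2 < μ k + ν k)) =>
        (p.1.1, k, μ k + ν k - 1 - p.1.2))
      ?_ ?_ ?_ ?_ ?_).symm
    · intro u hu
      obtain ⟨huS, hk'⟩ := Finset.mem_filter.mp hu
      obtain ⟨h1, h2, h3, h4⟩ := (mem_SS μ ν).mp huS
      rw [hk'] at h4
      erw [Finset.mem_filter]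
      exact ⟨@Finset.mem_univ (BipIdx μ ν) ‹_› _,
        show μ k + ν k - 1 - u.2.2 < μ k + ν k by omega⟩
    · rintro ⟨⟨i', j'⟩, hj'⟩ hp
      have hj2 : j' < μ i' + ν i' := hj'
      have hjk : j' < μ k + ν k := (Finset.mem_filter.mp hp).2
      rw [Finset.mem_filter]
      refine ⟨(mem_SS μ ν).mpr ⟨hrow i' (by omega), hrow k (by omega),
        show μ k + ν k ≤ μ i' + ν i' + (μ k + ν k - 1 - j') by omega,
        show μ k + ν k - 1 - j' < μ k + ν k by omega⟩, rfl⟩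
    · rintro ⟨i', k', s'⟩ hu
      obtain ⟨huS, hk'⟩ := Finset.mem_filter.mp hu
      obtain ⟨h1, h2, h3, h4⟩ := (mem_SS μ ν).mp huS
      have H4 : s' < μ k' + ν k' := h4
      have hk2 : k = k' := hk'.symm
      subst hk2
      dsimp only
      rw [Prod.mk.injEq, Prod.mk.injEq]
      exact ⟨rfl, rfl, by omega⟩
    · rintro ⟨⟨i', j'⟩, hj'⟩ hp
      have hjk : j' < μ k + ν k := (Finset.mem_filter.mp hp).2
      exact Subtype.ext (show (i', μ k + ν k - 1 - (μ k + ν k - 1 - j')) = (i', j') from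
        congrArg (fun t => (i', t)) (by omega))
    · rintro ⟨i', k', s'⟩ hu
      obtain ⟨huS, hk'⟩ := Finset.mem_filter.mp hu
      obtain ⟨h1, h2, h3, h4⟩ := (mem_SS μ ν).mp huS
      have H3 : μ k' + ν k' ≤ μ i' + ν i' + s' := h3
      have H4 : s' < μ k' + ν k' := h4
      have hk2 : k = k' := hk'.symm
      subst hk2
      dsimp only
      rw [htk, Y_apply' μ ν b, dif_pos ⟨rfl, by omega, by omega⟩]
      unfold cc
      rw [dif_pos (show s' < μ k + ν k ∧ μ k + ν k - 1 - s' < μ i' + ν i' from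
        ⟨H4, by omega⟩)]


omit hx in
lemma Ld_facts {N : ℕ} {t : ℕ × ℕ × ℕ} (ht : t ∈ Ld μ ν N) :
    t.1 = t.2.1 ∧ t.2.2 < μ t.1 ∧ μ t.1 - 1 - t.2.2 < μ t.1 + ν t.1 := by
  obtain ⟨hS, h1, h2⟩ := Finset.mem_filter.mp ht
  exact ⟨h1, h2, by omega⟩

include hv hμf

lemma mem_span_ee [Fintype (BipIdx μ ν)] (hμa : Antitone μ) (hνa : Antitone ν)
    {N : ℕ} (hN : ∀ i, N ≤ i → μ i = 0 ∧ ν i = 0)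
    (y : Module.End F V) (hcomm : x * y = y * x) (hyv : y v = 0) :
    y ∈ Submodule.span F (Set.range (fun u : ↥(SS' μ ν N) => ee μ ν b u.1)) := by
  classical
  set c := cc μ ν b y with hc
  have hSS : y = ∑ u ∈ SS μ ν N, c u • Y μ ν b u.1 u.2.1 u.2.2 :=
    y_eq_sum μ ν x b hx hN y hcomm
  set corr : ℕ × ℕ × ℕ → Module.End F V := fun u =>
    if u.2.2 < μ u.2.1 then Y μ ν b u.1 u.1 (μ u.1 - (μ u.2.1 - u.2.2)) else 0 with hcorr
  have heeY : ∀ u : ℕ × ℕ × ℕ, ee μ ν b u = Y μ ν b u.1 u.2.1 u.2.2 - corr u :=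
    fun u => rfl
  set lmap : ℕ × ℕ × ℕ → ℕ × ℕ × ℕ := fun u =>
    (u.1, u.1, μ u.1 - (μ u.2.1 - u.2.2)) with hlmap
  have hsplit : ∑ u ∈ SS μ ν N, c u • Y μ ν b u.1 u.2.1 u.2.2 =
      (∑ u ∈ SS' μ ν N, c u • Y μ ν b u.1 u.2.1 u.2.2) +
        ∑ u ∈ Ld μ ν N, c u • Y μ ν b u.1 u.2.1 u.2.2 := by
    rw [SS', Ld, add_comm,
      Finset.sum_filter_add_sum_filter_not (SS μ ν N)
        (fun u => u.1 = u.2.1 ∧ u.2.2 < μ u.1)]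
  have hAC : (∑ u ∈ SS' μ ν N, c u • Y μ ν b u.1 u.2.1 u.2.2) -
      (∑ u ∈ SS' μ ν N, c u • ee μ ν b u) = ∑ u ∈ SS' μ ν N, c u • corr u := by
    rw [← Finset.sum_sub_distrib]
    refine Finset.sum_congr rfl (fun u hu => ?_)
    rw [← smul_sub, heeY, sub_sub_cancel]
  have hw : y - (∑ u ∈ SS' μ ν N, c u • ee μ ν b u) =
      (∑ u ∈ Ld μ ν N, c u • Y μ ν b u.1 u.2.1 u.2.2) +
        ∑ u ∈ SS' μ ν N, c u • corr u := by
    calc y - (∑ u ∈ SS' μ ν N, c u • ee μ ν b u)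
        = ((∑ u ∈ SS' μ ν N, c u • Y μ ν b u.1 u.2.1 u.2.2) +
            ∑ u ∈ Ld μ ν N, c u • Y μ ν b u.1 u.2.1 u.2.2) -
            ∑ u ∈ SS' μ ν N, c u • ee μ ν b u := by rw [← hsplit, ← hSS]
      _ = (∑ u ∈ Ld μ ν N, c u • Y μ ν b u.1 u.2.1 u.2.2) +
            ((∑ u ∈ SS' μ ν N, c u • Y μ ν b u.1 u.2.1 u.2.2) -
              ∑ u ∈ SS' μ ν N, c u • ee μ ν b u) := by abel
      _ = _ := by rw [hAC]
  -- rewrite the correction sum fiberwise over Ld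
  have hcs : ∑ u ∈ SS' μ ν N, c u • corr u =
      ∑ u ∈ (SS' μ ν N).filter (fun u => u.2.2 < μ u.2.1),
        c u • Y μ ν b (lmap u).1 (lmap u).2.1 (lmap u).2.2 := by
    rw [Finset.sum_filter]
    refine Finset.sum_congr rfl (fun u hu => ?_)
    by_cases h : u.2.2 < μ u.2.1
    · rw [show corr u = Y μ ν b u.1 u.1 (μ u.1 - (μ u.2.1 - u.2.2)) from by
        rw [hcorr]; exact if_pos h,
        if_pos h]
    · rw [show corr u = 0 from by rw [hcorr]; exact if_neg h, if_neg h, smul_zero]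
  have hmapsto : ∀ u ∈ (SS' μ ν N).filter (fun u => u.2.2 < μ u.2.1),
      lmap u ∈ Ld μ ν N := by
    intro u hu
    obtain ⟨hu1, hu2⟩ := Finset.mem_filter.mp hu
    obtain ⟨huS, hun⟩ := Finset.mem_filter.mp hu1
    obtain ⟨h1, h2, h3, h4⟩ := (mem_SS μ ν).mp huS
    have hjl : μ u.2.1 - 1 - u.2.2 < μ u.1 := j_lt μ ν hμa hνa h3 hu2
    rw [Ld, Finset.mem_filter]
    refine ⟨(mem_SS μ ν).mpr ⟨?_, ?_, ?_, ?_⟩, rfl, ?_⟩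
    · exact h1
    · exact h1
    · show μ u.1 + ν u.1 ≤ μ u.1 + ν u.1 + (μ u.1 - (μ u.2.1 - u.2.2))
      omega
    · show μ u.1 - (μ u.2.1 - u.2.2) < μ u.1 + ν u.1
      omega
    · show μ u.1 - (μ u.2.1 - u.2.2) < μ u.1
      omega
  have hfib : ∑ u ∈ (SS' μ ν N).filter (fun u => u.2.2 < μ u.2.1),
      c u • Y μ ν b (lmap u).1 (lmap u).2.1 (lmap u).2.2 =
      ∑ t ∈ Ld μ ν N, (∑ u ∈ ((SS' μ ν N).filter
          (fun u => u.2.2 < μ u.2.1)).filter (fun u => lmap u = t), c u) •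
        Y μ ν b t.1 t.2.1 t.2.2 := by
    rw [← Finset.sum_fiberwise_of_maps_to hmapsto
      (fun u => c u • Y μ ν b (lmap u).1 (lmap u).2.1 (lmap u).2.2)]
    refine Finset.sum_congr rfl (fun t ht => ?_)
    rw [Finset.sum_smul]
    refine Finset.sum_congr rfl (fun u hu => ?_)
    rw [(Finset.mem_filter.mp hu).2]
  set D : ℕ × ℕ × ℕ → F := fun t => c t + ∑ u ∈ ((SS' μ ν N).filter
      (fun u => u.2.2 < μ u.2.1)).filter (fun u => lmap u = t), c u with hD
  have hwD : y - (∑ u ∈ SS' μ ν N, c u • ee μ ν b u) =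
      ∑ t ∈ Ld μ ν N, D t • Y μ ν b t.1 t.2.1 t.2.2 := by
    rw [hw, hcs, hfib, ← Finset.sum_add_distrib]
    refine Finset.sum_congr rfl (fun t ht => ?_)
    rw [hD, add_smul]
  -- evaluate at v
  have hwv : (∑ t ∈ Ld μ ν N, D t • Y μ ν b t.1 t.2.1 t.2.2) v = 0 := by
    rw [← hwD, LinearMap.sub_apply, hyv, LinearMap.sum_apply, zero_sub, neg_eq_zero]
    refine Finset.sum_eq_zero (fun u hu => ?_)
    rw [LinearMap.smul_apply,
      ee_v μ ν b v hv hμf hμa hνa ((Finset.filter_subset _ _) hu), smul_zero]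
  have hterm : ∀ t (ht : t ∈ Ld μ ν N), Y μ ν b t.1 t.2.1 t.2.2 v =
      b ⟨(t.1, μ t.1 - 1 - t.2.2), (Ld_facts μ ν ht).2.2⟩ := by
    intro t ht
    obtain ⟨ht1, ht2, ht3⟩ := Ld_facts μ ν ht
    have hmm : μ t.2.1 = μ t.1 := by rw [← ht1]
    rw [Y_v μ ν b v hv hμf, dif_pos (show t.2.2 < μ t.2.1 ∧
      μ t.2.1 - 1 - t.2.2 < μ t.1 + ν t.1 from ⟨by omega, by omega⟩)]
    exact congrArg b (Subtype.ext (congrArg (fun z => (t.1, z)) (by omega)))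
  rw [LinearMap.sum_apply] at hwv
  simp only [LinearMap.smul_apply] at hwv
  have hDzero : ∀ t ∈ Ld μ ν N, D t = 0 := by
    intro t₀ ht₀
    obtain ⟨ht01, ht02, ht03⟩ := Ld_facts μ ν ht₀
    have hco : ∀ t ∈ Ld μ ν N,
        b.coord ⟨(t₀.1, μ t₀.1 - 1 - t₀.2.2), ht03⟩ (Y μ ν b t.1 t.2.1 t.2.2 v) =
          if t = t₀ then 1 else 0 := by
      intro t ht
      obtain ⟨ht1, ht2, ht3⟩ := Ld_facts μ ν ht
      rw [hterm t ht]
      erw [Module.Basis.coord_apply, b.repr_self_apply]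
      by_cases he : t = t₀
      · subst he
        erw [if_pos rfl, if_pos rfl]
      · erw [if_neg he, if_neg]
        intro hcon
        apply he
        have hpe : (t.1, μ t.1 - 1 - t.2.2) = (t₀.1, μ t₀.1 - 1 - t₀.2.2) :=
          congrArg Subtype.val hcon
        have e1 : t.1 = t₀.1 := (Prod.ext_iff.mp hpe).1
        have e4 : μ t.1 - 1 - t.2.2 = μ t₀.1 - 1 - t₀.2.2 := (Prod.ext_iff.mp hpe).2
        have e5 : μ t.1 = μ t₀.1 := by rw [e1]
        have e3 : t.2.2 = t₀.2.2 := by omega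
        have e2 : t.2.1 = t₀.2.1 := by rw [← ht1, ← ht01, e1]
        exact Prod.ext_iff.mpr ⟨e1, Prod.ext_iff.mpr ⟨e2, e3⟩⟩
    have h0 := congrArg (b.coord ⟨(t₀.1, μ t₀.1 - 1 - t₀.2.2), ht03⟩) hwv
    rw [map_sum, map_zero] at h0
    simp only [map_smul, smul_eq_mul] at h0
    rw [Finset.sum_congr rfl (fun t ht => by rw [hco t ht])] at h0
    rw [Finset.sum_eq_single_of_mem t₀ ht₀
      (fun t ht hne => by rw [if_neg hne, mul_zero]), if_pos rfl, mul_one] at h0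
    exact h0
  have hyee : y = ∑ u ∈ SS' μ ν N, c u • ee μ ν b u := by
    rw [← sub_eq_zero, hwD]
    exact Finset.sum_eq_zero (fun t ht => by rw [hDzero t ht, zero_smul])
  rw [hyee]
  exact Submodule.sum_mem _ (fun u hu => Submodule.smul_mem _ _
    (Submodule.subset_span ⟨⟨u, hu⟩, rfl⟩))


omit hv hμf

omit hx in
lemma sum_min (f : ℕ → ℕ) (hf : Antitone f) (N : ℕ) :
    (∑ i ∈ Finset.range N, ∑ k ∈ Finset.range N, min (f i) (f k)) =
      ∑ i ∈ Finset.range N, (2 * i + 1) * f i := by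
  induction N with
  | zero => simp
  | succ N ih =>
    rw [Finset.sum_range_succ, Finset.sum_range_succ (f := fun i => (2 * i + 1) * f i)]
    have hinner : ∀ i ∈ Finset.range N, ∑ k ∈ Finset.range (N + 1), min (f i) (f k) =
        (∑ k ∈ Finset.range N, min (f i) (f k)) + f N := by
      intro i hi
      rw [Finset.sum_range_succ]
      congr 1
      exact min_eq_right (hf (le_of_lt (Finset.mem_range.mp hi)))
    rw [Finset.sum_congr rfl hinner, Finset.sum_add_distrib, ih, Finset.sum_range_succ]
    have hlast : ∀ k ∈ Finset.range N, min (f N) (f k) = f N := by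
      intro k hk
      exact min_eq_left (hf (le_of_lt (Finset.mem_range.mp hk)))
    rw [Finset.sum_congr rfl hlast]
    simp only [Finset.sum_const, smul_eq_mul, Finset.card_range, min_self]
    ring

omit hx in
lemma card_SS (N : ℕ) :
    (SS μ ν N).card =
      ∑ i ∈ Finset.range N, ∑ k ∈ Finset.range N, min (μ i + ν i) (μ k + ν k) := by
  rw [SS, Finset.card_biUnion]
  · rw [Finset.sum_product]
    refine Finset.sum_congr rfl (fun i _ => Finset.sum_congr rfl (fun k _ => ?_))
    dsimp only
    rw [Finset.card_image_of_injective _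
      (fun s1 s2 h => by
        have := congrArg (fun p : ℕ × ℕ × ℕ => p.2.2) h
        simpa using this : Function.Injective
        (fun s => (i, k, s) : ℕ → ℕ × ℕ × ℕ))]
    rw [Nat.card_Ico]
    omega
  · intro q1 h1 q2 h2 hne
    rw [Function.onFun, Finset.disjoint_left]
    intro a ha1 ha2
    apply hne
    obtain ⟨s1, _, rfl⟩ := Finset.mem_image.mp ha1
    obtain ⟨s2, _, he⟩ := Finset.mem_image.mp ha2
    have h1 : q2.1 = q1.1 := (Prod.ext_iff.mp he).1
    have h2 : q2.2 = q1.2 := (Prod.ext_iff.mp (Prod.ext_iff.mp he).2).1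
    exact (Prod.ext_iff.mpr ⟨h1.symm, h2.symm⟩)

omit hx in
lemma card_Ld (N : ℕ) :
    (Ld μ ν N).card = ∑ i ∈ Finset.range N, μ i := by
  have hLd : Ld μ ν N = (Finset.range N).biUnion
      (fun i => (Finset.range (μ i)).image (fun t => (i, i, t))) := by
    apply Finset.ext
    intro u
    rw [Ld, Finset.mem_filter, mem_SS]
    simp only [Finset.mem_biUnion, Finset.mem_image, Finset.mem_range]
    constructor
    · rintro ⟨⟨h1, h2, h3, h4⟩, h5, h6⟩
      refine ⟨u.1, h1, u.2.2, h6, ?_⟩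
      rw [Prod.ext_iff, Prod.ext_iff]
      exact ⟨rfl, h5, rfl⟩
    · rintro ⟨i, hi, t, ht, rfl⟩
      exact ⟨⟨hi, hi, show μ i + ν i ≤ μ i + ν i + t by omega,
        show t < μ i + ν i by omega⟩, rfl, ht⟩
  rw [hLd, Finset.card_biUnion]
  · refine Finset.sum_congr rfl (fun i _ => ?_)
    rw [Finset.card_image_of_injective _
      (fun t1 t2 h => by
        have := congrArg (fun p : ℕ × ℕ × ℕ => p.2.2) h
        simpa using this : Function.Injective
        (fun t => (i, i, t) : ℕ → ℕ × ℕ × ℕ)), Finset.card_range]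
  · intro i1 h1 i2 h2 hne
    rw [Function.onFun, Finset.disjoint_left]
    intro a ha1 ha2
    apply hne
    obtain ⟨t1, _, rfl⟩ := Finset.mem_image.mp ha1
    obtain ⟨t2, _, he⟩ := Finset.mem_image.mp ha2
    exact ((Prod.ext_iff.mp he).1).symm

omit hx in
lemma card_SS' (hμa : Antitone μ) (hνa : Antitone ν) (N : ℕ)
    (hN : ∀ i, N ≤ i → μ i = 0 ∧ ν i = 0) :
    (SS' μ ν N).card = 2 * nFn μ + 2 * nFn ν + psize ν := by
  have hla : Antitone (fun i => μ i + ν i) := fun a c h => add_le_add (hμa h) (hνa h)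
  have h1 : (SS μ ν N).card = (∑ i ∈ Finset.range N, μ i) + (∑ i ∈ Finset.range N, ν i)
      + 2 * (∑ i ∈ Finset.range N, i * μ i) + 2 * (∑ i ∈ Finset.range N, i * ν i) := by
    rw [card_SS, sum_min (fun i => μ i + ν i) hla N,
      Finset.sum_congr rfl (fun i (_ : i ∈ Finset.range N) =>
        (by ring : (2 * i + 1) * (μ i + ν i) = μ i + ν i + 2 * (i * μ i) + 2 * (i * ν i))),
      Finset.sum_add_distrib, Finset.sum_add_distrib, Finset.sum_add_distrib,
      ← Finset.mul_sum, ← Finset.mul_sum]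
  have h2 : (Ld μ ν N).card = ∑ i ∈ Finset.range N, μ i := card_Ld μ ν N
  have h3 : (Ld μ ν N).card + (SS' μ ν N).card = (SS μ ν N).card := by
    rw [Ld, SS']
    exact Finset.card_filter_add_card_filter_not _
  have hn1 : nFn μ = ∑ i ∈ Finset.range N, i * μ i := by
    rw [nFn]
    refine finsum_eq_finset_sum_of_support_subset _ (fun i hi => ?_)
    rw [Finset.coe_range, Set.mem_Iio]
    by_contra hcon
    have h0 := (hN i (le_of_not_gt hcon)).1
    simp only [Function.mem_support] at hi
    exact hi (by rw [h0, mul_zero])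
  have hn2 : nFn ν = ∑ i ∈ Finset.range N, i * ν i := by
    rw [nFn]
    refine finsum_eq_finset_sum_of_support_subset _ (fun i hi => ?_)
    rw [Finset.coe_range, Set.mem_Iio]
    by_contra hcon
    have h0 := (hN i (le_of_not_gt hcon)).2
    simp only [Function.mem_support] at hi
    exact hi (by rw [h0, mul_zero])
  have hn3 : psize ν = ∑ i ∈ Finset.range N, ν i := by
    rw [psize]
    refine finsum_eq_finset_sum_of_support_subset _ (fun i hi => ?_)
    rw [Finset.coe_range, Set.mem_Iio]
    by_contra hcon
    have h0 := (hN i (le_of_not_gt hcon)).2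
    simp only [Function.mem_support] at hi
    exact hi h0
  rw [hn1, hn2, hn3]
  omega

end Stab

/-- If `(v,x)` has a normal basis of type `(μ;ν)`, then
`E^{(v,x)} = {y ∈ End(V) : xy = yx, yv = 0}` has dimension
`b(μ;ν) = 2n(μ) + 2n(ν) + |ν|`. -/
theorem stabilizer_dim {F V : Type*} [Field F] [AddCommGroup V] [Module F V]
    [IsAlgClosed F] [FiniteDimensional F V]
    (μ ν : ℕ → ℕ) (hμ : IsPartition μ) (hν : IsPartition ν)
    (v : V) (x : Module.End F V) (b : Module.Basis (BipIdx μ ν) F V)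
    (hb : IsNormalBasis μ ν v x b) :
    Module.finrank F
      ↥(LinearMap.ker (LinearMap.mulLeft F x - LinearMap.mulRight F x) ⊓
        LinearMap.ker ((LinearMap.applyₗ v : Module.End F V →ₗ[F] V))) =
      2 * nFn μ + 2 * nFn ν + psize ν := by
  classical
  obtain ⟨hx, hv⟩ := hb
  obtain ⟨hμa, hμf⟩ := hμ
  obtain ⟨hνa, hνf⟩ := hν
  haveI : Fintype (BipIdx μ ν) := FiniteDimensional.fintypeBasisIndex b
  set T : Finset ℕ := (hμf.union hνf).toFinset with hT
  set N : ℕ := T.sup id + 1 with hNdef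
  have hN : ∀ i, N ≤ i → μ i = 0 ∧ ν i = 0 := by
    intro i hi
    constructor
    · by_contra h
      have hiT : i ∈ T := by
        rw [hT, Set.Finite.mem_toFinset]
        exact Or.inl h
      have := Finset.le_sup (f := id) hiT
      simp only [id] at this
      omega
    · by_contra h
      have hiT : i ∈ T := by
        rw [hT, Set.Finite.mem_toFinset]
        exact Or.inr h
      have := Finset.le_sup (f := id) hiT
      simp only [id] at this
      omega
  have hspan : LinearMap.ker (LinearMap.mulLeft F x - LinearMap.mulRight F x) ⊓
      LinearMap.ker ((LinearMap.applyₗ v : Module.End F V →ₗ[F] V)) =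
      Submodule.span F (Set.range (fun u : ↥(Stab.SS' μ ν N) => Stab.ee μ ν b u.1)) := by
    apply le_antisymm
    · intro y hy
      obtain ⟨hy1, hy2⟩ := Submodule.mem_inf.mp hy
      rw [LinearMap.mem_ker, LinearMap.sub_apply, LinearMap.mulLeft_apply,
        LinearMap.mulRight_apply, sub_eq_zero] at hy1
      rw [LinearMap.mem_ker] at hy2
      have hy2' : y v = 0 := hy2
      exact Stab.mem_span_ee μ ν x b hx v hv hμf hμa hνa hN y hy1 hy2'
    · rw [Submodule.span_le]
      rintro _ ⟨u, rfl⟩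
      have huS : u.1 ∈ Stab.SS μ ν N := Finset.filter_subset _ _ u.2
      rw [SetLike.mem_coe, Submodule.mem_inf]
      constructor
      · rw [LinearMap.mem_ker, LinearMap.sub_apply, LinearMap.mulLeft_apply,
          LinearMap.mulRight_apply, sub_eq_zero]
        exact Stab.ee_comm μ ν x b hx huS
      · rw [LinearMap.mem_ker]
        show Stab.ee μ ν b u.1 v = 0
        exact Stab.ee_v μ ν b v hv hμf hμa hνa huS
  rw [hspan, finrank_span_eq_card (Stab.ee_indep μ ν b hμa hνa N), Fintype.card_coe]
  exact Stab.card_SS' μ ν hμa hνa N hN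
end

section
/- Let k×k' matrices of nonnegative integers with prescribed row sums (n_1,…,n_k) and column sums (n'_1,…,n'_{k'}) (both compositions of n) be in bijection with double cosets S_{(n'_j)} \ S_n / S_{(n_i)} of Young subgroups, via sending the double coset of w to the matrix (m_{ij}) with Σ_{i'≤i, j'≤j} m_{i'j'} = |{s ≤ n_1+⋯+n_i : w(s) ≤ n'_1+⋯+n'_j}|. This map is a well-defined bijection. -/
/-- Partial sums of a composition: `psum c i = c_1 + ⋯ + c_i` (0-indexed). -/
def psum (c : ℕ → ℕ) (i : ℕ) : ℕ := ∑ j ∈ Finset.range i, c j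

/-- The index of the block (of the composition `c`) containing position `s`
(0-indexed): the number of indices `i` with `c_1 + ⋯ + c_{i+1} ≤ s`. -/
noncomputable def blk (c : ℕ → ℕ) (s : ℕ) : ℕ := Nat.card {i : ℕ | psum c (i + 1) ≤ s}

/-- The Young subgroup of `S_n` attached to a composition `c`: permutations
preserving each consecutive block of sizes `c_1, c_2, …`. -/
noncomputable def Young (n : ℕ) (c : ℕ → ℕ) : Set (Equiv.Perm (Fin n)) :=
  {w | ∀ s : Fin n, blk c ((w s : Fin n) : ℕ) = blk c (s : ℕ)}

/-- `w` and `w'` lie in the same double coset `S_{(c')} \ S_n / S_{(c)}`. -/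
noncomputable def SameDC (n : ℕ) (c c' : ℕ → ℕ) (w w' : Equiv.Perm (Fin n)) : Prop :=
  ∃ a ∈ Young n c', ∃ b ∈ Young n c, w' = a * w * b

/-- The matrix `m` corresponds to `w` via the cumulative-sum condition
`Σ_{i'≤i, j'≤j} m_{i'j'} = |{s ≤ c_1+⋯+c_i : w(s) ≤ c'_1+⋯+c'_j}|`. -/
noncomputable def Corr (n : ℕ) (c c' : ℕ → ℕ) (w : Equiv.Perm (Fin n))
    (m : ℕ → ℕ → ℕ) : Prop :=
  ∀ i j : ℕ,
    (∑ p ∈ Finset.range i ×ˢ Finset.range j, m p.1 p.2) =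
      Nat.card {s : Fin n | (s : ℕ) < psum c i ∧ ((w s : Fin n) : ℕ) < psum c' j}

/-- `m` is a `k × k'` matrix of nonnegative integers with row sums `c` and
column sums `c'`. -/
noncomputable def MatSet (k k' : ℕ) (c c' : ℕ → ℕ) (m : ℕ → ℕ → ℕ) : Prop :=
  (∀ i j, (k ≤ i ∨ k' ≤ j) → m i j = 0) ∧
  (∀ i, (∑ j ∈ Finset.range k', m i j) = c i) ∧
  (∀ j, (∑ i ∈ Finset.range k, m i j) = c' j)

/- ## helpers -/

lemma psum_mono {c : ℕ → ℕ} : Monotone (psum c) := fun a b hab =>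
  Finset.sum_le_sum_of_subset (Finset.range_subset_range.2 hab)

lemma psum_succ (c : ℕ → ℕ) (i : ℕ) : psum c (i + 1) = psum c i + c i :=
  Finset.sum_range_succ c i

lemma psum_stab {c : ℕ → ℕ} {K : ℕ} (h0 : ∀ i, K ≤ i → c i = 0) {j : ℕ} (hj : K ≤ j) :
    psum c j = psum c K := by
  refine (Finset.sum_subset (Finset.range_subset_range.2 hj) ?_).symm
  intro x hx hnx
  exact h0 x (by simpa using hnx)

lemma psum_le_stab {c : ℕ → ℕ} {K : ℕ} (h0 : ∀ i, K ≤ i → c i = 0) (j : ℕ) :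
    psum c j ≤ psum c K := by
  rcases le_or_gt j K with h | h
  · exact psum_mono h
  · exact le_of_eq (psum_stab h0 h.le)

lemma blk_lt_iff {c : ℕ → ℕ} {s : ℕ} (hex : ∃ p, s < psum c (p + 1)) (i : ℕ) :
    blk c s < i ↔ s < psum c i := by
  have hset : {p : ℕ | psum c (p + 1) ≤ s} = Set.Iio (Nat.find hex) := by
    ext p
    simp only [Set.mem_setOf_eq, Set.mem_Iio]
    constructor
    · intro hp
      by_contra h
      push_neg at h
      exact absurd hp (not_le.2 (lt_of_lt_of_le (Nat.find_spec hex)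
        (psum_mono (by omega))))
    · intro hp
      have := Nat.find_min hex hp
      omega
  have hblk : blk c s = Nat.find hex := by
    rw [blk, hset]; simp [Nat.card_eq_card_toFinset]
  rw [hblk]
  constructor
  · intro h
    exact lt_of_lt_of_le (Nat.find_spec hex) (psum_mono h)
  · intro h
    cases i with
    | zero => simp [psum] at h
    | succ t => exact Nat.lt_succ_of_le (Nat.find_le h)

lemma blk_eq_iff {c : ℕ → ℕ} {s : ℕ} (hex : ∃ p, s < psum c (p + 1)) (p : ℕ) :
    blk c s = p ↔ psum c p ≤ s ∧ s < psum c (p + 1) := by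
  have h1 := blk_lt_iff hex p
  have h2 := blk_lt_iff hex (p + 1)
  constructor
  · intro h; subst h
    exact ⟨not_lt.1 (fun hc => absurd ((h1).2 hc) (lt_irrefl _)), h2.1 (by omega)⟩
  · rintro ⟨ha, hb⟩
    have := h2.2 hb
    have : ¬ blk c s < p := fun hc => absurd (h1.1 hc) (not_lt.2 ha)
    omega

section main
variable {n k k' : ℕ} {c c' : ℕ → ℕ}

lemma hexFin (hc : psum c k = n) (s : Fin n) : ∃ p, (s : ℕ) < psum c (p + 1) :=
  ⟨k, by have := s.isLt; rw [psum_succ]; omega⟩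

lemma blk_fin_lt (hc : psum c k = n) (s : Fin n) : blk c (s : ℕ) < k :=
  (blk_lt_iff (hexFin hc s) k).2 (by rw [hc]; exact s.isLt)

lemma young_thresh (hc : psum c k = n) {b : Equiv.Perm (Fin n)} (hb : b ∈ Young n c)
    (s : Fin n) (i : ℕ) : ((b s : Fin n) : ℕ) < psum c i ↔ (s : ℕ) < psum c i := by
  rw [← blk_lt_iff (hexFin hc (b s)) i, ← blk_lt_iff (hexFin hc s) i, hb s]

/-- Bridge: Nat.card of a set in a Fintype as a filter card. -/
lemma natCard_filter {p : Fin n → Prop} [DecidablePred p] :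
    Nat.card {s | p s} = (Finset.univ.filter p).card := by
  rw [Nat.card_eq_fintype_card, Fintype.card_subtype]
  congr 1

lemma natCard_Ico {a b : ℕ} (hb : b ≤ n) :
    Nat.card {s : Fin n | a ≤ (s : ℕ) ∧ (s : ℕ) < b} = b - a := by
  classical
  rw [natCard_filter, ← Nat.card_Ico a b]
  refine Finset.card_bij' (fun s _ => (s : ℕ)) (fun x hx => ⟨x, ?_⟩) ?_ ?_ ?_ ?_
  · simp only [Finset.mem_Ico] at hx; omega
  · intro s hs; simp only [Finset.mem_filter] at hs; simp [Finset.mem_Ico]; omega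
  · intro x hx; simp only [Finset.mem_Ico] at hx; simp; omega
  · intro s hs; rfl
  · intro x hx; rfl

/-- partition of a counted set according to the fibers of a map into a finset -/
lemma natCard_partition {β : Type} [DecidableEq β] (P : Fin n → Prop) (φ : Fin n → β)
    (T : Finset β) (hiff : ∀ s, P s ↔ φ s ∈ T) :
    Nat.card {s | P s} = ∑ t ∈ T, Nat.card {s | φ s = t} := by
  classical
  rw [natCard_filter]
  rw [Finset.card_eq_sum_card_fiberwise (f := φ) (t := T)
    (fun x hx => (hiff x).1 (Finset.mem_filter.1 hx).2)]
  refine Finset.sum_congr rfl fun t ht => ?_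
  rw [natCard_filter]
  congr 1
  ext s
  simp only [Finset.mem_filter, Finset.mem_univ, true_and]
  exact ⟨fun h => h.2, fun h => ⟨(hiff s).2 (h ▸ ht), h⟩⟩

/-- the canonical matrix attached to w -/
noncomputable def mcan (n : ℕ) (c c' : ℕ → ℕ) (w : Equiv.Perm (Fin n)) : ℕ → ℕ → ℕ :=
  fun p q => Nat.card {s : Fin n | blk c (s : ℕ) = p ∧ blk c' ((w s : Fin n) : ℕ) = q}

lemma natCard_pair (w : Equiv.Perm (Fin n)) (p q : ℕ) :
    Nat.card {s : Fin n | (blk c (s : ℕ), blk c' ((w s : Fin n) : ℕ)) = (p, q)} =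
      mcan n c c' w p q := by
  have h : {s : Fin n | (blk c (s : ℕ), blk c' ((w s : Fin n) : ℕ)) = (p, q)} =
      {s : Fin n | blk c (s : ℕ) = p ∧ blk c' ((w s : Fin n) : ℕ) = q} := by
    ext s; simp [Prod.ext_iff]
  rw [mcan, h]

lemma corr_mcan (hcs : psum c k = n) (hcs' : psum c' k' = n) (w : Equiv.Perm (Fin n)) :
    Corr n c c' w (mcan n c c' w) := by
  classical
  intro i j
  have hset : {s : Fin n | (s : ℕ) < psum c i ∧ ((w s : Fin n) : ℕ) < psum c' j} =
      {s : Fin n | blk c (s : ℕ) < i ∧ blk c' ((w s : Fin n) : ℕ) < j} := by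
    ext s
    rw [Set.mem_setOf_eq, Set.mem_setOf_eq, blk_lt_iff (hexFin hcs s),
      blk_lt_iff (hexFin hcs' (w s))]
  rw [hset, natCard_partition _ (fun s => (blk c (s : ℕ), blk c' ((w s : Fin n) : ℕ)))
    (Finset.range i ×ˢ Finset.range j) (fun s => by simp [Finset.mem_product])]
  refine Finset.sum_congr rfl fun t ht => ?_
  exact (natCard_pair w t.1 t.2).symm

lemma card_blk_fiber (hc0 : ∀ i, k ≤ i → c i = 0) (hcs : psum c k = n) (p : ℕ) :
    Nat.card {s : Fin n | blk c (s : ℕ) = p} = c p := by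
  have hset : {s : Fin n | blk c (s : ℕ) = p} =
      {s : Fin n | psum c p ≤ (s : ℕ) ∧ (s : ℕ) < psum c (p + 1)} := by
    ext s; exact blk_eq_iff (hexFin hcs s) p
  rw [hset, natCard_Ico (by rw [← hcs]; exact psum_le_stab hc0 (p + 1)), psum_succ]
  omega

lemma mcan_matset (hc0 : ∀ i, k ≤ i → c i = 0) (hc'0 : ∀ j, k' ≤ j → c' j = 0)
    (hcs : psum c k = n) (hcs' : psum c' k' = n) (w : Equiv.Perm (Fin n)) :
    MatSet k k' c c' (mcan n c c' w) := by
  classical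
  refine ⟨?_, ?_, ?_⟩
  · intro i j hij
    have h : {s : Fin n | blk c (s : ℕ) = i ∧ blk c' ((w s : Fin n) : ℕ) = j} =
        (∅ : Set (Fin n)) := by
      ext s
      simp only [Set.mem_setOf_eq, Set.mem_empty_iff_false, iff_false, not_and]
      intro h1 h2
      rcases hij with h | h
      · exact absurd h1 (by have := blk_fin_lt hcs s; omega)
      · exact absurd h2 (by have := blk_fin_lt hcs' (w s); omega)
    rw [mcan, h]
    simp
  · intro p
    have := natCard_partition (n := n) (fun s => blk c (s : ℕ) = p)
      (fun s => (blk c (s : ℕ), blk c' ((w s : Fin n) : ℕ)))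
      ({p} ×ˢ Finset.range k')
      (fun s => by
        simp only [Finset.mem_product, Finset.mem_singleton, Finset.mem_range]
        exact ⟨fun h => ⟨h, blk_fin_lt hcs' (w s)⟩, fun h => h.1⟩)
    rw [card_blk_fiber hc0 hcs p, Finset.sum_product, Finset.sum_singleton] at this
    rw [this]
    exact Finset.sum_congr rfl fun q hq => (natCard_pair w p q).symm
  · intro q
    have hperm : Nat.card {s : Fin n | blk c' ((w s : Fin n) : ℕ) = q} =
        Nat.card {t : Fin n | blk c' (t : ℕ) = q} :=
      Nat.card_congr (Equiv.subtypeEquiv w (fun s => Iff.rfl))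
    have := natCard_partition (n := n) (fun s => blk c' ((w s : Fin n) : ℕ) = q)
      (fun s => (blk c (s : ℕ), blk c' ((w s : Fin n) : ℕ)))
      (Finset.range k ×ˢ {q})
      (fun s => by
        simp only [Finset.mem_product, Finset.mem_singleton, Finset.mem_range]
        exact ⟨fun h => ⟨blk_fin_lt hcs s, h⟩, fun h => h.2⟩)
    rw [hperm, card_blk_fiber hc'0 hcs' q, Finset.sum_product,
      Finset.sum_comm, Finset.sum_singleton] at this
    rw [this]
    exact Finset.sum_congr rfl fun p hp => (natCard_pair w p q).symm

lemma corr_unique {w : Equiv.Perm (Fin n)} {m m' : ℕ → ℕ → ℕ}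
    (h : Corr n c c' w m) (h' : Corr n c c' w m') : ∀ p q, m p q = m' p q := by
  have key : ∀ (m : ℕ → ℕ → ℕ) (p q : ℕ),
      (∑ t ∈ Finset.range (p+1) ×ˢ Finset.range (q+1), m t.1 t.2) +
      (∑ t ∈ Finset.range p ×ˢ Finset.range q, m t.1 t.2) =
      (∑ t ∈ Finset.range p ×ˢ Finset.range (q+1), m t.1 t.2) +
      (∑ t ∈ Finset.range (p+1) ×ˢ Finset.range q, m t.1 t.2) + m p q := by
    intro m p q
    simp only [Finset.sum_product, Finset.sum_range_succ]
    ring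
  intro p q
  have k1 := key m p q
  have k2 := key m' p q
  rw [h (p+1) (q+1), h p q, h p (q+1), h (p+1) q] at k1
  rw [h' (p+1) (q+1), h' p q, h' p (q+1), h' (p+1) q] at k2
  omega

lemma exists_perm {α β : Type} [Finite α] (f g : α → β)
    (h : ∀ t, Nat.card {x // f x = t} = Nat.card {x // g x = t}) :
    ∃ e : Equiv.Perm α, ∀ s, f (e s) = g s := by
  classical
  haveI := Fintype.ofFinite α
  have he : ∀ t, Nonempty ({x // g x = t} ≃ {x // f x = t}) := fun t =>
    ⟨Fintype.equivOfCardEq (by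
      rw [← Nat.card_eq_fintype_card, ← Nat.card_eq_fintype_card, h t])⟩
  refine ⟨(Equiv.sigmaFiberEquiv g).symm.trans
    ((Equiv.sigmaCongrRight fun t => (he t).some).trans (Equiv.sigmaFiberEquiv f)),
    fun s => ?_⟩
  exact ((he (g s)).some ⟨s, rfl⟩).2

lemma corr_sameDC (hcs : psum c k = n) (hcs' : psum c' k' = n)
    {w w' : Equiv.Perm (Fin n)} {m : ℕ → ℕ → ℕ}
    (hdc : SameDC n c c' w w') (h : Corr n c c' w m) : Corr n c c' w' m := by
  obtain ⟨a, ha, b, hb, rfl⟩ := hdc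
  intro i j
  rw [h i j]
  have hset : {s : Fin n | (s : ℕ) < psum c i ∧ (((a * w * b) s : Fin n) : ℕ) < psum c' j} =
      {s : Fin n | ((b s : Fin n) : ℕ) < psum c i ∧ ((w (b s) : Fin n) : ℕ) < psum c' j} := by
    ext s
    simp only [Set.mem_setOf_eq, Equiv.Perm.mul_apply]
    rw [young_thresh hcs' ha (w (b s)) j, young_thresh hcs hb s i]
  rw [hset]
  exact Nat.card_congr (Equiv.subtypeEquiv b fun s => Iff.rfl).symm

lemma corr_inj (hcs : psum c k = n) (hcs' : psum c' k' = n)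
    {w w' : Equiv.Perm (Fin n)} {m : ℕ → ℕ → ℕ}
    (h : Corr n c c' w m) (h' : Corr n c c' w' m) : SameDC n c c' w w' := by
  classical
  have hm : ∀ p q, mcan n c c' w p q = mcan n c c' w' p q := fun p q =>
    (corr_unique (corr_mcan hcs hcs' w) h p q).trans
      (corr_unique h' (corr_mcan hcs hcs' w') p q)
  obtain ⟨b, hbp⟩ := exists_perm
    (fun s : Fin n => (blk c (s : ℕ), blk c' ((w s : Fin n) : ℕ)))
    (fun s : Fin n => (blk c (s : ℕ), blk c' ((w' s : Fin n) : ℕ)))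
    (by
      rintro ⟨p, q⟩
      exact (natCard_pair w p q).trans ((hm p q).trans (natCard_pair w' p q).symm))
  have hb1 : ∀ s, blk c ((b s : Fin n) : ℕ) = blk c (s : ℕ) := fun s =>
    congrArg Prod.fst (hbp s)
  have hb2 : ∀ s, blk c' ((w (b s) : Fin n) : ℕ) = blk c' ((w' s : Fin n) : ℕ) := fun s =>
    congrArg Prod.snd (hbp s)
  refine ⟨w' * b⁻¹ * w⁻¹, ?_, b, hb1, ?_⟩
  · intro t
    have h2 := hb2 (b⁻¹ (w⁻¹ t))
    simp only [show ∀ x, b (b⁻¹ x) = x from b.apply_symm_apply,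
      show ∀ x, w (w⁻¹ x) = x from w.apply_symm_apply] at h2
    simp only [Equiv.Perm.mul_apply]
    exact h2.symm
  · group

lemma corr_surj (hc0 : ∀ i, k ≤ i → c i = 0) (hc'0 : ∀ j, k' ≤ j → c' j = 0)
    (hcs : psum c k = n) (hcs' : psum c' k' = n) {m : ℕ → ℕ → ℕ}
    (hm : MatSet k k' c c' m) : ∃ w : Equiv.Perm (Fin n), Corr n c c' w m := by
  classical
  obtain ⟨hz, hrow, hcol⟩ := hm
  set g : Fin n → ℕ := fun s => blk (m (blk c (s : ℕ))) ((s : ℕ) - psum c (blk c (s : ℕ)))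
    with hg
  have hrowp : ∀ p, psum (m p) k' = c p := fun p => hrow p
  have hpsle : ∀ p j, psum (m p) j ≤ c p := fun p j => by
    rw [← hrowp p]; exact psum_le_stab (fun j hj => hz p j (Or.inr hj)) j
  have core : ∀ p q, Nat.card {s : Fin n | blk c (s : ℕ) = p ∧ g s = q} = m p q := by
    intro p q
    have hps := psum_succ c p
    have hq1 := hpsle p (q + 1)
    have hq0 := hpsle p q
    have hpsm := psum_succ (m p) q
    have hset : {s : Fin n | blk c (s : ℕ) = p ∧ g s = q} =
        {s : Fin n | psum c p + psum (m p) q ≤ (s : ℕ) ∧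
          (s : ℕ) < psum c p + psum (m p) (q + 1)} := by
      ext s
      simp only [Set.mem_setOf_eq, hg]
      constructor
      · rintro ⟨h1, h2⟩
        have hint := (blk_eq_iff (hexFin hcs s) p).1 h1
        rw [h1] at h2
        have hexm : ∃ j, ((s : ℕ) - psum c p) < psum (m p) (j + 1) :=
          ⟨k', by have := psum_succ (m p) k'; have := hrowp p; omega⟩
        have h3 := (blk_eq_iff hexm q).1 h2
        omega
      · rintro ⟨h1, h2⟩
        have h1' : blk c (s : ℕ) = p :=
          (blk_eq_iff (hexFin hcs s) p).2 ⟨by omega, by omega⟩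
        refine ⟨h1', ?_⟩
        rw [h1']
        have hexm : ∃ j, ((s : ℕ) - psum c p) < psum (m p) (j + 1) :=
          ⟨k', by have := psum_succ (m p) k'; have := hrowp p; omega⟩
        exact (blk_eq_iff hexm q).2 ⟨by omega, by omega⟩
    have hbound : psum c p + psum (m p) (q + 1) ≤ n := by
      have h4 : psum c (p + 1) ≤ psum c k := psum_le_stab hc0 (p + 1)
      omega
    rw [hset, natCard_Ico hbound]
    omega
  have hfib : ∀ q : ℕ, Nat.card {s : Fin n | blk c' (s : ℕ) = q} =
      Nat.card {s : Fin n | g s = q} := by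
    intro q
    have heach : ∀ p, Nat.card {s : Fin n | (blk c (s : ℕ), g s) = (p, q)} = m p q := by
      intro p
      have hs : {s : Fin n | (blk c (s : ℕ), g s) = (p, q)} =
          {s : Fin n | blk c (s : ℕ) = p ∧ g s = q} := by
        ext s; simp [Prod.ext_iff]
      rw [hs, core p q]
    have hpart := natCard_partition (n := n) (fun s => g s = q)
      (fun s => (blk c (s : ℕ), g s)) (Finset.range k ×ˢ {q})
      (fun s => by
        simp only [Finset.mem_product, Finset.mem_singleton, Finset.mem_range]
        exact ⟨fun h => ⟨blk_fin_lt hcs s, h⟩, fun h => h.2⟩)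
    rw [Finset.sum_product, Finset.sum_comm, Finset.sum_singleton] at hpart
    rw [card_blk_fiber hc'0 hcs' q, hpart, ← hcol q]
    exact (Finset.sum_congr rfl fun p hp => heach p).symm
  obtain ⟨w, hw⟩ := exists_perm (fun s : Fin n => blk c' (s : ℕ)) g (fun q => hfib q)
  refine ⟨w, ?_⟩
  have hmc : ∀ p q, mcan n c c' w p q = m p q := by
    intro p q
    rw [← core p q, mcan]
    have hs : {s : Fin n | blk c (s : ℕ) = p ∧ blk c' ((w s : Fin n) : ℕ) = q} =
        {s : Fin n | blk c (s : ℕ) = p ∧ g s = q} := by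
      ext s; rw [Set.mem_setOf_eq, Set.mem_setOf_eq, hw s]
    rw [hs]
  intro i j
  rw [← corr_mcan hcs hcs' w i j]
  exact Finset.sum_congr rfl fun t ht => (hmc t.1 t.2).symm

end main


/-- Matrices of nonnegative integers with row sums `(n_1,…,n_k)` and column sums
`(n'_1,…,n'_{k'})` are in bijection with double cosets of Young subgroups,
via the cumulative-sum correspondence `Corr`: the correspondence is a
well-defined, constant-on-double-cosets, injective-on-double-cosets,
surjective map. -/
theorem doubleCoset_matrix_bijection (n k k' : ℕ) (c c' : ℕ → ℕ)
    (hc0 : ∀ i, k ≤ i → c i = 0) (hc'0 : ∀ j, k' ≤ j → c' j = 0)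
    (hcs : psum c k = n) (hcs' : psum c' k' = n) :
    (∀ w : Equiv.Perm (Fin n), ∃ m, MatSet k k' c c' m ∧ Corr n c c' w m) ∧
    (∀ w m m', Corr n c c' w m → Corr n c c' w m' →
      ∀ i j, i < k → j < k' → m i j = m' i j) ∧
    (∀ w w' m, SameDC n c c' w w' → Corr n c c' w m → Corr n c c' w' m) ∧
    (∀ w w' m, Corr n c c' w m → Corr n c c' w' m → SameDC n c c' w w') ∧
    (∀ m, MatSet k k' c c' m → ∃ w : Equiv.Perm (Fin n), Corr n c c' w m) := by
  refine ⟨?_, ?_, ?_, ?_, ?_⟩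
  · exact fun w => ⟨mcan n c c' w, mcan_matset hc0 hc'0 hcs hcs' w, corr_mcan hcs hcs' w⟩
  · exact fun w m m' h h' i j _ _ => corr_unique h h' i j
  · exact fun w w' m hdc h => corr_sameDC hcs hcs' hdc h
  · exact fun w w' m h h' => corr_inj hcs hcs' h h'
  · exact fun m hm => corr_surj hc0 hc'0 hcs hcs' hm
end
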